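/- Let G=(V,E) be a finite connected graph with positive vertex measure μ and positive symmetric edge weights w, let n≥1 be an integer, and let h:V→ℝ change sign on V and satisfy ∫_V h dμ < 0. Then there exists a constant C>0 such that for every t∈[0,1], every solution u:V→ℝ of −Δu = h(x)(u^{2n}/(1+u^{2n})) e^u − t satisfies max_{x∈V} |u(x)| ≤ C. -/

import Mathlib

open Finset Real

section helpers
variable {V : Type*} [Fintype V] [DecidableEq V] {G : SimpleGraph V} [DecidableRel G.Adj]

lemma nbr_swap (F : V → V → ℝ) :
    ∑ x, ∑ y ∈ G.neighborFinset x, F x y = ∑ x, ∑ y ∈ G.neighborFinset x, F y x := by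
  rw [Finset.sum_comm' (t' := Finset.univ) (s' := fun y => G.neighborFinset y)]
  intro x y
  simp [SimpleGraph.mem_neighborFinset, G.adj_comm]

lemma nbr_swap_sub (s : Finset V) (F : V → V → ℝ) :
    ∑ x ∈ s, ∑ y ∈ (G.neighborFinset x).filter (· ∈ s), F x y
      = ∑ x ∈ s, ∑ y ∈ (G.neighborFinset x).filter (· ∈ s), F y x := by
  rw [Finset.sum_comm' (t' := s) (s' := fun y => (G.neighborFinset y).filter (· ∈ s))]
  intro x y
  simp only [Finset.mem_filter, SimpleGraph.mem_neighborFinset]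
  constructor
  · rintro ⟨hx, hy, hys⟩; exact ⟨⟨G.adj_comm x y |>.mp hy, hx⟩, hys⟩
  · rintro ⟨⟨hy, hxs⟩, hys⟩; exact ⟨hxs, G.adj_comm y x |>.mp hy, hys⟩

lemma antisym_zero_sub (s : Finset V) {w : V → V → ℝ} (hw : ∀ x y, w x y = w y x)
    (u : V → ℝ) :
    ∑ x ∈ s, ∑ y ∈ (G.neighborFinset x).filter (· ∈ s), w x y * (u y - u x) = 0 := by
  have h2 := nbr_swap_sub (G := G) s (fun x y => w x y * (u y - u x))
  have key : (2:ℝ) * ∑ x ∈ s, ∑ y ∈ (G.neighborFinset x).filter (· ∈ s), w x y * (u y - u x) = 0 := by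
    rw [two_mul]
    nth_rewrite 2 [h2]
    rw [← Finset.sum_add_distrib]
    apply Finset.sum_eq_zero; intro x _
    rw [← Finset.sum_add_distrib]
    apply Finset.sum_eq_zero; intro y _
    rw [hw y x]; ring
  linarith

lemma antisym_zero {w : V → V → ℝ} (hw : ∀ x y, w x y = w y x) (u : V → ℝ) :
    ∑ x, ∑ y ∈ G.neighborFinset x, w x y * (u y - u x) = 0 := by
  have h2 := nbr_swap (G := G) (fun x y => w x y * (u y - u x))
  have key : (2:ℝ) * ∑ x, ∑ y ∈ G.neighborFinset x, w x y * (u y - u x) = 0 := by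
    rw [two_mul]
    nth_rewrite 2 [h2]
    rw [← Finset.sum_add_distrib]
    apply Finset.sum_eq_zero; intro x _
    rw [← Finset.sum_add_distrib]
    apply Finset.sum_eq_zero; intro y _
    rw [hw y x]; ring
  linarith

lemma energy_identity {w : V → V → ℝ} (hw : ∀ x y, w x y = w y x) (u : V → ℝ) :
    ∑ x, ∑ y ∈ G.neighborFinset x, w x y * (u y - u x) * u x
      = -(1/2) * ∑ x, ∑ y ∈ G.neighborFinset x, w x y * (u y - u x)^2 := by
  have h2 := nbr_swap (G := G) (fun x y => w x y * (u y - u x) * u x)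
  have key : (2:ℝ) * ∑ x, ∑ y ∈ G.neighborFinset x, w x y * (u y - u x) * u x
      = ∑ x, ∑ y ∈ G.neighborFinset x, -(w x y * (u y - u x)^2) := by
    rw [two_mul]
    nth_rewrite 2 [h2]
    rw [← Finset.sum_add_distrib]
    apply Finset.sum_congr rfl; intro x _
    rw [← Finset.sum_add_distrib]
    apply Finset.sum_congr rfl; intro y _
    rw [hw y x]; ring
  have key2 : ∑ x, ∑ y ∈ G.neighborFinset x, -(w x y * (u y - u x)^2)
      = - ∑ x, ∑ y ∈ G.neighborFinset x, (w x y * (u y - u x)^2) := by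
    simp
  rw [key2] at key
  linarith

lemma walk_telescope {u : V → ℝ} {g : ℝ}
    (hedge : ∀ a b, G.Adj a b → |u a - u b| ≤ g) :
    ∀ {a b : V} (p : G.Walk a b), |u a - u b| ≤ p.length * g := by
  intro a b p
  induction p with
  | nil => simp
  | @cons a c b hadj q ih =>
      have h1 : |u a - u b| ≤ |u a - u c| + |u c - u b| := abs_sub_le _ _ _
      have h2 := hedge a c hadj
      simp only [SimpleGraph.Walk.length_cons]
      push_cast
      linarith

lemma exists_boundary {s : Finset V} :
    ∀ {a b : V} (_ : G.Walk a b), a ∈ s → b ∉ s → ∃ x ∈ s, ∃ y, G.Adj x y ∧ y ∉ s := by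
  intro a b p
  induction p with
  | nil => intro ha hb; exact absurd ha hb
  | @cons a c b hadj q ih =>
      intro ha hb
      by_cases hc : c ∈ s
      · exact ih hc hb
      · exact ⟨a, ha, c, hadj, hc⟩

lemma exists_edge {a b : V} (hne : a ≠ b) (p : G.Walk a b) : ∃ x y, G.Adj x y := by
  cases p with
  | nil => exact absurd rfl hne
  | cons hadj q => exact ⟨_, _, hadj⟩

end helpers

set_option maxHeartbeats 1000000 in
/-- If `h` changes sign and `∫_V h dμ < 0`, then there is `C > 0`
such that for every `t ∈ [0,1]`, every solution of
`-Δu = h (u^(2n)/(1+u^(2n))) e^u - t` satisfies `max_V |u| ≤ C`. -/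
theorem stmt19 {V : Type*} [Fintype V] [Nonempty V]
    (G : SimpleGraph V) [DecidableRel G.Adj] (hconn : G.Connected)
    (μ : V → ℝ) (hμ : ∀ x, 0 < μ x)
    (w : V → V → ℝ) (hwsymm : ∀ x y, w x y = w y x)
    (hwpos : ∀ x y, G.Adj x y → 0 < w x y)
    (n : ℕ) (hn : 1 ≤ n)
    (h : V → ℝ) (hpos : ∃ x, 0 < h x) (hneg : ∃ x, h x < 0)
    (hint : ∑ x, μ x * h x < 0) :
    ∃ C : ℝ, 0 < C ∧ ∀ t ∈ Set.Icc (0 : ℝ) 1, ∀ u : V → ℝ,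
      (∀ x, -((1 / μ x) * ∑ y ∈ G.neighborFinset x, w x y * (u y - u x))
          = h x * ((u x) ^ (2 * n) / (1 + (u x) ^ (2 * n))) * Real.exp (u x) - t) →
      ∀ x, |u x| ≤ C := by
  classical
  obtain ⟨xp, hxp⟩ := hpos
  obtain ⟨xq, hxq⟩ := hneg
  have hpq : xp ≠ xq := fun e => absurd (e ▸ hxp) (asymm hxq)
  -- basic constants
  set μV : ℝ := ∑ x, μ x with hμVdef
  have hμV : 0 < μV := Finset.sum_pos (fun x _ => hμ x) Finset.univ_nonempty
  obtain ⟨x0, -, hμ0min⟩ := Finset.exists_min_image Finset.univ μ Finset.univ_nonempty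
  set μ0 : ℝ := μ x0 with hμ0def
  have hμ0 : 0 < μ0 := hμ x0
  have hμ0le : ∀ x, μ0 ≤ μ x := fun x => hμ0min x (Finset.mem_univ x)
  have hμ0μV : μ0 ≤ μV := Finset.single_le_sum (f := μ) (fun x _ => (hμ x).le) (Finset.mem_univ x0)
  obtain ⟨xh, -, hHmmax⟩ := Finset.exists_max_image Finset.univ (fun x => |h x|) Finset.univ_nonempty
  set Hm : ℝ := |h xh| with hHmdef
  have hHmle : ∀ x, |h x| ≤ Hm := fun x => hHmmax x (Finset.mem_univ x)
  have hHm : 0 < Hm := lt_of_lt_of_le (abs_pos.mpr hxp.ne') (hHmle xp)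
  -- positive part of h
  set Sp : Finset V := Finset.univ.filter (fun x => 0 < h x) with hSpdef
  have hxpSp : xp ∈ Sp := by simp [hSpdef, hxp]
  obtain ⟨xhp, hxhpS, hhpmin⟩ := Finset.exists_min_image Sp h ⟨xp, hxpSp⟩
  set hp : ℝ := h xhp with hhpdef
  have hhp : 0 < hp := (Finset.mem_filter.mp hxhpS).2
  have hhple : ∀ x, 0 < h x → hp ≤ h x := fun x hx => hhpmin x (by simp [hSpdef, hx])
  -- negative part
  set Sm : Finset V := Finset.univ.filter (fun x => h x < 0) with hSmdef
  have hxqSm : xq ∈ Sm := by simp [hSmdef, hxq]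
  obtain ⟨xhm, hxhmS, hhmmin⟩ := Finset.exists_min_image Sm (fun x => -h x) ⟨xq, hxqSm⟩
  set hm : ℝ := -h xhm with hhmdef
  have hhm : 0 < hm := by
    have := (Finset.mem_filter.mp hxhmS).2; simp only [hhmdef]; linarith
  have hhmle : ∀ x, h x < 0 → hm ≤ -h x := fun x hx => hhmmin x (by simp [hSmdef, hx])
  -- edge weights
  set Ed : Finset (V × V) := Finset.univ.filter (fun p : V × V => G.Adj p.1 p.2) with hEddef
  obtain ⟨e1, e2, he⟩ := exists_edge hpq (hconn.preconnected xp xq).some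
  have hEdne : Ed.Nonempty := ⟨(e1, e2), by simp [hEddef, he]⟩
  obtain ⟨pw, hpwS, hw0min⟩ := Finset.exists_min_image Ed (fun p => w p.1 p.2) hEdne
  set w0 : ℝ := w pw.1 pw.2 with hw0def
  have hw0 : 0 < w0 := hwpos _ _ ((Finset.mem_filter.mp hpwS).2)
  have hw0le : ∀ a b, G.Adj a b → w0 ≤ w a b := fun a b hab => hw0min (a, b) (by simp [hEddef, hab])
  obtain ⟨pW, -, hWmax⟩ := Finset.exists_max_image Ed (fun p => w p.1 p.2) hEdne
  set Wm : ℝ := w pW.1 pW.2 with hWmdef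
  have hWmle : ∀ a b, G.Adj a b → w a b ≤ Wm := fun a b hab => hWmax (a, b) (by simp [hEddef, hab])
  have hWm : 0 < Wm := lt_of_lt_of_le (hwpos _ _ he) (hWmle _ _ he)
  set Nc : ℝ := (Fintype.card V : ℝ) with hNcdef
  have hNc1 : 1 ≤ Nc := by
    simp only [hNcdef]; exact_mod_cast Fintype.card_pos
  set W1 : ℝ := Nc * Wm with hW1def
  have hW1 : 0 < W1 := mul_pos (lt_of_lt_of_le one_pos hNc1) hWm
  have hsumw : ∀ x : V, ∑ y ∈ G.neighborFinset x, w x y ≤ W1 := by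
    intro x
    calc ∑ y ∈ G.neighborFinset x, w x y
        ≤ (G.neighborFinset x).card • Wm := by
          apply Finset.sum_le_card_nsmul
          intro y hy
          exact hWmle x y ((SimpleGraph.mem_neighborFinset G x y).mp hy)
      _ ≤ (Fintype.card V) • Wm := by
          apply nsmul_le_nsmul_left hWm.le
          exact Finset.card_le_univ _
      _ = Nc * Wm := by simp [hNcdef, nsmul_eq_mul]
  -- main constants
  set K : ℝ := 2 * (Nc - 1)^2 * μV / w0 with hKdef
  have hK : 0 ≤ K := by positivity
  set c5 : ℝ := μV * (1 + Hm) / (μ0 * hp) with hc5def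
  have hc5 : 1 ≤ c5 := by
    rw [hc5def, le_div_iff₀ (by positivity)]
    have h1 : hp ≤ Hm := le_trans (le_abs_self _) (hHmle xhp)
    nlinarith
  set A : ℝ := 8 * c5 + 8 with hAdef
  have hA1 : 16 ≤ A := by simp only [hAdef]; linarith
  have hApos : 0 < A := by linarith
  set lnA : ℝ := Real.log A with hlnAdef
  have hlnA : 0 < lnA := Real.log_pos (by linarith)
  set c6 : ℝ := μ0 * hm / W1 with hc6def
  have hc6 : 0 < c6 := by positivity
  set ρ : ℝ := 1 + Real.log (1 + 2 * lnA / c6) with hρdef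
  have hρ1 : 1 ≤ ρ := by
    have h1 : (0:ℝ) ≤ 2 * lnA / c6 := by positivity
    have h2 : 0 ≤ Real.log (1 + 2 * lnA / c6) := Real.log_nonneg (by linarith)
    rw [hρdef]; linarith
  set C8 : ℝ := lnA + ρ with hC8def
  have hC8 : 1 < C8 := by simp only [hC8def]; linarith
  set I : ℝ := ∑ x, μ x * h x with hIdef
  have hI : I < 0 := hint
  set C9 : ℝ := max 1 (2 * μV * Hm * (1 + 2 * K * Hm) / (-I)) with hC9def
  have hC91 : 1 ≤ C9 := le_max_left _ _
  have hC9I : 2 * μV * Hm * (1 + 2 * K * Hm) / (-I) ≤ C9 := le_max_right _ _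
  set B0 : ℝ := Hm * Real.exp C8 + 1 with hB0def
  have hB0 : 0 < B0 := by positivity
  refine ⟨C8 + C9 + K * B0 + 1, by positivity, ?_⟩
  rintro t ⟨ht0, ht1⟩ u hu
  -- nonlinearity
  set P : V → ℝ := fun x => (u x) ^ (2 * n) / (1 + (u x) ^ (2 * n)) with hPdef
  have hpow0 : ∀ s : ℝ, 0 ≤ s ^ (2 * n) := fun s => (even_two_mul n).pow_nonneg s
  have hden : ∀ s : ℝ, 0 < 1 + s ^ (2 * n) := fun s => by have := hpow0 s; linarith only [this]
  have hP0 : ∀ x, 0 ≤ P x := fun x => div_nonneg (hpow0 _) (hden _).le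
  have hP1 : ∀ x, P x ≤ 1 := by
    intro x
    rw [hPdef]
    rw [div_le_one (hden _)]
    linarith only [hpow0 (u x)]
  have hPge : ∀ x, 1 ≤ u x → 1/2 ≤ P x := by
    intro x hx
    have h1 : (1:ℝ) ≤ (u x) ^ (2 * n) := one_le_pow₀ hx
    rw [hPdef]
    rw [le_div_iff₀ (hden _)]
    linarith only [h1]
  -- rewritten equation
  have key : ∀ x, ∑ y ∈ G.neighborFinset x, w x y * (u y - u x)
      = μ x * (t - h x * P x * Real.exp (u x)) := by
    intro x
    have hx := hu x
    have hμx : μ x ≠ 0 := (hμ x).ne'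
    have hPx : P x = (u x) ^ (2 * n) / (1 + (u x) ^ (2 * n)) := rfl
    rw [← hPx] at hx
    field_simp at hx
    linarith only [hx]
  -- integral identity
  have Id1 : ∑ x, μ x * (h x * P x * Real.exp (u x)) = t * μV := by
    have e2 := antisym_zero (G := G) hwsymm u
    have e3 : ∑ x, μ x * (t - h x * P x * Real.exp (u x)) = 0 := by
      rw [← e2]
      exact (Finset.sum_congr rfl fun x _ => (key x).symm)
    have e4 : ∑ x, μ x * (t - h x * P x * Real.exp (u x))
        = t * μV - ∑ x, μ x * (h x * P x * Real.exp (u x)) := by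
      rw [hμVdef, Finset.mul_sum, ← Finset.sum_sub_distrib]
      exact Finset.sum_congr rfl fun x _ => by ring
    rw [e4] at e3
    linarith only [e3]
  -- extrema
  obtain ⟨xM, -, hxMmax⟩ := Finset.exists_max_image Finset.univ u Finset.univ_nonempty
  obtain ⟨xm, -, hxmmin⟩ := Finset.exists_min_image Finset.univ u Finset.univ_nonempty
  set M : ℝ := u xM with hMdef
  set m : ℝ := u xm with hmdef
  have hMle : ∀ x, u x ≤ M := fun x => hxMmax x (Finset.mem_univ x)
  have hmle : ∀ x, m ≤ u x := fun x => hxmmin x (Finset.mem_univ x)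
  obtain ⟨xP, hxPS, hxPmax⟩ := Finset.exists_max_image Sp u ⟨xp, hxpSp⟩
  set MP : ℝ := u xP with hMPdef
  have hMPle : ∀ x, 0 < h x → u x ≤ MP := fun x hx => hxPmax x (by simp [hSpdef, hx])
  obtain ⟨xN, hxNS, hxNmax⟩ := Finset.exists_max_image Sm u ⟨xq, hxqSm⟩
  set MN : ℝ := u xN with hMNdef
  have hMNle : ∀ x, h x < 0 → u x ≤ MN := fun x hx => hxNmax x (by simp [hSmdef, hx])
  have hhxP : 0 < h xP := (Finset.mem_filter.mp hxPS).2
  have hhxN : h xN < 0 := (Finset.mem_filter.mp hxNS).2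
  -- Step U1 : global max controlled by max MP MN
  have hub : ∀ x, u x ≤ max MP MN := by
    by_contra hcon
    push_neg at hcon
    obtain ⟨z, hz⟩ := hcon
    set s : Finset V := Finset.univ.filter (fun x => max MP MN < u x) with hsdef
    have hnotins : ∀ y, y ∉ s → u y ≤ max MP MN := by
      intro y hys
      by_contra hc
      exact hys (by simp only [hsdef, Finset.mem_filter, Finset.mem_univ, true_and]; exact lt_of_not_ge hc)
    have hins : ∀ y ∈ s, max MP MN < u y := fun y hy => (Finset.mem_filter.mp hy).2
    have hzs : z ∈ s := by simp only [hsdef, Finset.mem_filter, Finset.mem_univ, true_and]; exact hz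
    have hxPs : xP ∉ s := by
      simp only [hsdef, Finset.mem_filter, Finset.mem_univ, true_and, not_lt]
      exact le_max_left _ _
    have hhzero : ∀ x ∈ s, h x = 0 := by
      intro x hx
      have hx' := hins x hx
      rcases lt_trichotomy (h x) 0 with hlt | heq | hgt
      · exact absurd (lt_of_le_of_lt (le_max_right MP MN) hx') (not_lt.mpr (hMNle x hlt))
      · exact heq
      · exact absurd (lt_of_le_of_lt (le_max_left MP MN) hx') (not_lt.mpr (hMPle x hgt))
    have hTpos : 0 ≤ ∑ x ∈ s, ∑ y ∈ G.neighborFinset x, w x y * (u y - u x) := by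
      apply Finset.sum_nonneg
      intro x hx
      rw [key x, hhzero x hx]
      simp only [zero_mul, mul_zero, sub_zero]
      exact mul_nonneg (hμ x).le ht0
    obtain ⟨x1, hx1s, y1, hadj1, hy1s⟩ := exists_boundary (G := G)
      (hconn.preconnected z xP).some hzs hxPs
    have houter : ∀ x ∈ s, ∑ y ∈ (G.neighborFinset x).filter (¬ · ∈ s), w x y * (u y - u x) ≤ 0 := by
      intro x hx
      apply Finset.sum_nonpos
      intro y hy
      obtain ⟨hyN, hys⟩ := Finset.mem_filter.mp hy
      have hadj := (SimpleGraph.mem_neighborFinset G x y).mp hyN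
      have h1 : u y ≤ max MP MN := hnotins y hys
      have h2 := hins x hx
      have hw' := hwpos x y hadj
      exact mul_nonpos_of_nonneg_of_nonpos hw'.le (by linarith only [h1, h2])
    have houter1 : ∑ y ∈ (G.neighborFinset x1).filter (¬ · ∈ s), w x1 y * (u y - u x1) < 0 := by
      have hy1mem : y1 ∈ (G.neighborFinset x1).filter (¬ · ∈ s) := by
        simp only [Finset.mem_filter, SimpleGraph.mem_neighborFinset]
        exact ⟨hadj1, hy1s⟩
      have hlt : ∑ y ∈ (G.neighborFinset x1).filter (¬ · ∈ s), w x1 y * (u y - u x1)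
          < ∑ _y ∈ (G.neighborFinset x1).filter (¬ · ∈ s), (0:ℝ) := by
        apply Finset.sum_lt_sum
        · intro y hy
          obtain ⟨hyN, hys⟩ := Finset.mem_filter.mp hy
          have hadj := (SimpleGraph.mem_neighborFinset G x1 y).mp hyN
          have h1 : u y ≤ max MP MN := hnotins y hys
          have h2 := hins x1 hx1s
          have hw' := hwpos x1 y hadj
          exact mul_nonpos_of_nonneg_of_nonpos hw'.le (by linarith only [h1, h2])
        · refine ⟨y1, hy1mem, ?_⟩
          have h1 : u y1 ≤ max MP MN := hnotins y1 hy1s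
          have h2 := hins x1 hx1s
          have hw' := hwpos x1 y1 hadj1
          exact mul_neg_of_pos_of_neg hw' (by linarith only [h1, h2])
      simpa using hlt
    have hsum_lt : ∑ x ∈ s, ∑ y ∈ (G.neighborFinset x).filter (¬ · ∈ s), w x y * (u y - u x) < 0 := by
      have hlt : ∑ x ∈ s, ∑ y ∈ (G.neighborFinset x).filter (¬ · ∈ s), w x y * (u y - u x)
          < ∑ _x ∈ s, (0:ℝ) := Finset.sum_lt_sum houter ⟨x1, hx1s, houter1⟩
      simpa using hlt
    have hin := antisym_zero_sub (G := G) s hwsymm u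
    have hsplit : ∑ x ∈ s, ∑ y ∈ G.neighborFinset x, w x y * (u y - u x)
        = (∑ x ∈ s, ∑ y ∈ (G.neighborFinset x).filter (· ∈ s), w x y * (u y - u x))
          + ∑ x ∈ s, ∑ y ∈ (G.neighborFinset x).filter (¬ · ∈ s), w x y * (u y - u x) := by
      rw [← Finset.sum_add_distrib]
      exact Finset.sum_congr rfl fun x _ => (Finset.sum_filter_add_sum_filter_not _ _ _).symm
    rw [hsplit, hin, zero_add] at hTpos
    exact absurd hTpos (not_le.mpr hsum_lt)
  -- Step U2 : integral estimate at positive max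
  have hA' : μ0 * hp * (P xP * Real.exp MP) ≤ μV * (1 + Hm) * (1 + Real.exp MN) := by
    have hsplitId : (∑ x ∈ Sp, μ x * (h x * P x * Real.exp (u x)))
        + ∑ x ∈ Finset.univ.filter (fun x => ¬ 0 < h x), μ x * (h x * P x * Real.exp (u x))
        = t * μV := by
      rw [← Id1, hSpdef]
      exact Finset.sum_filter_add_sum_filter_not _ _ _
    have hterm : μ0 * hp * (P xP * Real.exp MP) ≤ μ xP * (h xP * P xP * Real.exp (u xP)) := by
      have e1 := hμ0le xP
      have e2 := hhple xP hhxP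
      have e3 := hP0 xP
      have e4 := (Real.exp_pos (u xP)).le
      have e5 : hp * (P xP * Real.exp MP) ≤ h xP * (P xP * Real.exp (u xP)) := by
        apply mul_le_mul_of_nonneg_right e2
        exact mul_nonneg e3 e4
      have e6 : 0 ≤ hp * (P xP * Real.exp MP) :=
        mul_nonneg hhp.le (mul_nonneg e3 e4)
      calc μ0 * hp * (P xP * Real.exp MP) = μ0 * (hp * (P xP * Real.exp MP)) := by ring
        _ ≤ μ xP * (h xP * (P xP * Real.exp (u xP))) := mul_le_mul e1 e5 e6 (hμ xP).le
        _ = μ xP * (h xP * P xP * Real.exp (u xP)) := by ring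
    have hsingle : μ xP * (h xP * P xP * Real.exp (u xP))
        ≤ ∑ x ∈ Sp, μ x * (h x * P x * Real.exp (u x)) := by
      apply Finset.single_le_sum (f := fun x => μ x * (h x * P x * Real.exp (u x))) _ hxPS
      intro x hx
      have hhx : 0 < h x := (Finset.mem_filter.mp hx).2
      exact mul_nonneg (hμ x).le
        (mul_nonneg (mul_nonneg hhx.le (hP0 x)) (Real.exp_pos _).le)
    have hrest : ∀ x ∈ Finset.univ.filter (fun x => ¬ 0 < h x),
        - (μ x * (h x * P x * Real.exp (u x))) ≤ μ x * (Hm * Real.exp MN) := by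
      intro x hx
      have hhx : h x ≤ 0 := not_lt.mp (Finset.mem_filter.mp hx).2
      rcases eq_or_lt_of_le hhx with heq | hlt
      · rw [heq]
        simp only [zero_mul, mul_zero, neg_zero]
        exact mul_nonneg (hμ x).le (mul_nonneg hHm.le (Real.exp_pos _).le)
      · have e1 : -h x ≤ Hm := by
          have := hHmle x; rw [abs_of_neg hlt] at this; linarith only [this]
        have e2 : Real.exp (u x) ≤ Real.exp MN := Real.exp_le_exp.mpr (hMNle x hlt)
        have e3 := hP0 x
        have e4 := hP1 x
        have e5 := (Real.exp_pos (u x)).le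
        have e6 : (-h x) * (P x * Real.exp (u x)) ≤ Hm * Real.exp MN := by
          have e7 : P x * Real.exp (u x) ≤ Real.exp MN := by
            calc P x * Real.exp (u x) ≤ 1 * Real.exp (u x) :=
                  mul_le_mul_of_nonneg_right e4 e5
              _ = Real.exp (u x) := one_mul _
              _ ≤ Real.exp MN := e2
          have e8 : 0 ≤ P x * Real.exp (u x) := mul_nonneg e3 e5
          calc (-h x) * (P x * Real.exp (u x)) ≤ Hm * (P x * Real.exp (u x)) :=
                mul_le_mul_of_nonneg_right e1 e8
            _ ≤ Hm * Real.exp MN := mul_le_mul_of_nonneg_left e7 hHm.le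
        calc - (μ x * (h x * P x * Real.exp (u x)))
            = μ x * ((-h x) * (P x * Real.exp (u x))) := by ring
          _ ≤ μ x * (Hm * Real.exp MN) := mul_le_mul_of_nonneg_left e6 (hμ x).le
    have hrest2 : - (∑ x ∈ Finset.univ.filter (fun x => ¬ 0 < h x),
        μ x * (h x * P x * Real.exp (u x))) ≤ μV * (Hm * Real.exp MN) := by
      rw [← Finset.sum_neg_distrib]
      calc ∑ x ∈ Finset.univ.filter (fun x => ¬ 0 < h x), - (μ x * (h x * P x * Real.exp (u x)))
          ≤ ∑ x ∈ Finset.univ.filter (fun x => ¬ 0 < h x), μ x * (Hm * Real.exp MN) :=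
            Finset.sum_le_sum hrest
        _ = (∑ x ∈ Finset.univ.filter (fun x => ¬ 0 < h x), μ x) * (Hm * Real.exp MN) := by
            rw [Finset.sum_mul]
        _ ≤ μV * (Hm * Real.exp MN) := by
            apply mul_le_mul_of_nonneg_right _ (mul_nonneg hHm.le (Real.exp_pos _).le)
            rw [hμVdef]
            exact Finset.sum_le_sum_of_subset_of_nonneg (Finset.filter_subset _ _)
              (fun x _ _ => (hμ x).le)
    have htuv : t * μV ≤ μV := by nlinarith only [ht1, hμV]
    have hfin : μ0 * hp * (P xP * Real.exp MP) ≤ μV + μV * (Hm * Real.exp MN) := by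
      linarith only [hterm, hsingle, hsplitId, hrest2, htuv]
    have hlast : μV + μV * (Hm * Real.exp MN) ≤ μV * (1 + Hm) * (1 + Real.exp MN) := by
      nlinarith only [hμV.le, hHm.le, (Real.exp_pos MN).le, mul_nonneg hμV.le hHm.le,
        mul_nonneg hμV.le (Real.exp_pos MN).le]
    linarith only [hfin, hlast]
  -- Step U3 : steep ascent at negative max
  have hB' : μ0 * hm * (P xN * Real.exp MN) ≤ W1 * (max MP MN - MN) := by
    have hk := key xN
    have h1 : μ0 * (hm * (P xN * Real.exp MN)) ≤ μ xN * (t - h xN * P xN * Real.exp (u xN)) := by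
      have e1 := hμ0le xN
      have e2 := hhmle xN hhxN
      have e3 : 0 ≤ P xN * Real.exp (u xN) := mul_nonneg (hP0 xN) (Real.exp_pos _).le
      have e5 : hm * (P xN * Real.exp MN) ≤ t - h xN * P xN * Real.exp (u xN) := by
        have e6 : hm * (P xN * Real.exp (u xN)) ≤ (-h xN) * (P xN * Real.exp (u xN)) :=
          mul_le_mul_of_nonneg_right e2 e3
        have hMNeq : MN = u xN := rfl
        rw [hMNeq]
        linarith only [e6, ht0]
      have e7 : 0 ≤ hm * (P xN * Real.exp MN) :=
        mul_nonneg hhm.le (mul_nonneg (hP0 xN) (Real.exp_pos _).le)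
      exact mul_le_mul e1 e5 e7 (hμ xN).le
    have h2 : ∑ y ∈ G.neighborFinset xN, w xN y * (u y - u xN) ≤ W1 * (max MP MN - MN) := by
      have hmax0 : 0 ≤ max MP MN - MN := by
        have := le_max_right MP MN; linarith only [this]
      have hstep : ∀ y ∈ G.neighborFinset xN,
          w xN y * (u y - u xN) ≤ w xN y * (max MP MN - MN) := by
        intro y hy
        have hadj := (SimpleGraph.mem_neighborFinset G xN y).mp hy
        apply mul_le_mul_of_nonneg_left _ (hwpos _ _ hadj).le
        have := hub y
        have hMNeq : MN = u xN := rfl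
        rw [hMNeq]
        linarith only [this]
      calc ∑ y ∈ G.neighborFinset xN, w xN y * (u y - u xN)
          ≤ ∑ y ∈ G.neighborFinset xN, w xN y * (max MP MN - MN) := Finset.sum_le_sum hstep
        _ = (∑ y ∈ G.neighborFinset xN, w xN y) * (max MP MN - MN) := by rw [Finset.sum_mul]
        _ ≤ W1 * (max MP MN - MN) := mul_le_mul_of_nonneg_right (hsumw xN) hmax0
    calc μ0 * hm * (P xN * Real.exp MN) = μ0 * (hm * (P xN * Real.exp MN)) := by ring
      _ ≤ μ xN * (t - h xN * P xN * Real.exp (u xN)) := h1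
      _ = ∑ y ∈ G.neighborFinset xN, w xN y * (u y - u xN) := hk.symm
      _ ≤ W1 * (max MP MN - MN) := h2
  -- Step U4a : MN is bounded
  have hMNb : MN ≤ ρ := by
    by_contra hc
    push_neg at hc
    have hMN1 : 1 ≤ MN := le_trans hρ1 hc.le
    have hPN : 1/2 ≤ P xN := hPge xN hMN1
    have hgap : c6 * ((1/2) * Real.exp MN) ≤ max MP MN - MN := by
      rw [hc6def, div_mul_eq_mul_div, div_le_iff₀ hW1]
      have e1 : μ0 * hm * ((1/2) * Real.exp MN) ≤ μ0 * hm * (P xN * Real.exp MN) := by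
        apply mul_le_mul_of_nonneg_left _ (by positivity)
        exact mul_le_mul_of_nonneg_right hPN (Real.exp_pos _).le
      calc μ0 * hm * (1/2 * Real.exp MN) ≤ μ0 * hm * (P xN * Real.exp MN) := e1
        _ ≤ W1 * (max MP MN - MN) := hB'
        _ = (max MP MN - MN) * W1 := by ring
    have hρe : 1 + 2*lnA/c6 ≤ Real.exp ρ := by
      calc 1 + 2*lnA/c6 = Real.exp (Real.log (1 + 2*lnA/c6)) := by
            rw [Real.exp_log (by positivity)]
        _ ≤ Real.exp ρ := by
            apply Real.exp_le_exp.mpr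
            rw [hρdef]
            linarith only []
    have hexp : 2 * lnA / c6 ≤ Real.exp MN := by
      have h5 : Real.exp ρ ≤ Real.exp MN := Real.exp_le_exp.mpr hc.le
      linarith only [hρe, h5]
    have hgap2 : lnA ≤ max MP MN - MN := by
      have h6 : c6 * ((1/2) * (2*lnA/c6)) ≤ c6 * ((1/2) * Real.exp MN) := by
        apply mul_le_mul_of_nonneg_left _ hc6.le
        linarith only [hexp]
      have heq : c6 * ((1/2) * (2*lnA/c6)) = lnA := by field_simp
      linarith only [h6, hgap, heq]
    have hMPM : max MP MN = MP := by
      rcases le_or_gt MP MN with hcase | hcase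
      · exfalso
        rw [max_eq_right hcase] at hgap2
        linarith only [hgap2, hlnA]
      · exact max_eq_left hcase.le
    rw [hMPM] at hgap2
    have hMP1 : 1 ≤ MP := by linarith only [hgap2, hMN1, hlnA]
    have hPP : 1/2 ≤ P xP := hPge xP hMP1
    have hMN0 : 1 ≤ Real.exp MN := by
      rw [← Real.exp_zero]
      exact Real.exp_le_exp.mpr (by linarith only [hMN1])
    have hc5mul : c5 * (μ0 * hp) = μV * (1 + Hm) := by
      rw [hc5def]
      field_simp
    have hMPeq : MP = u xP := rfl
    have h9 : (μ0*hp) * Real.exp MP ≤ (μ0*hp) * (4*c5*Real.exp MN) := by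
      have e1 : μ0 * hp * ((1/2) * Real.exp MP) ≤ μ0 * hp * (P xP * Real.exp MP) := by
        apply mul_le_mul_of_nonneg_left _ (by positivity)
        exact mul_le_mul_of_nonneg_right hPP (Real.exp_pos _).le
      have e2 : μV * (1 + Hm) * (1 + Real.exp MN) ≤ c5 * (μ0*hp) * (2 * Real.exp MN) := by
        rw [hc5mul]
        apply mul_le_mul_of_nonneg_left _ (by positivity)
        linarith only [hMN0]
      nlinarith only [hA', e1, e2]
    have h10 : Real.exp MP ≤ 4*c5*Real.exp MN := le_of_mul_le_mul_left h9 (by positivity)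
    have hratio : Real.exp (MP - MN) ≤ 4 * c5 := by
      rw [Real.exp_sub, div_le_iff₀ (Real.exp_pos MN)]
      linarith only [h10]
    have hge : (A:ℝ) ≤ Real.exp (MP - MN) := by
      calc A = Real.exp lnA := by rw [hlnAdef, Real.exp_log hApos]
        _ ≤ Real.exp (MP - MN) := Real.exp_le_exp.mpr (by linarith only [hgap2])
    rw [hAdef] at hge
    linarith only [hratio, hge, hc5]
  -- Global upper bound by C8
  have hubC8 : ∀ x, u x ≤ C8 := by
    have hMNC8 : MN ≤ C8 := by rw [hC8def]; linarith only [hMNb, hlnA]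
    have hMPb : MP ≤ C8 := by
      rcases le_or_gt MP 1 with hcase | hcase
      · linarith only [hcase, hC8]
      · have hPP : 1/2 ≤ P xP := hPge xP hcase.le
        have hc5mul : c5 * (μ0 * hp) = μV * (1 + Hm) := by
          rw [hc5def]; field_simp
        have h9 : (μ0*hp) * Real.exp MP ≤ (μ0*hp) * (2*c5*(1 + Real.exp MN)) := by
          have e1 : μ0 * hp * ((1/2) * Real.exp MP) ≤ μ0 * hp * (P xP * Real.exp MP) := by
            apply mul_le_mul_of_nonneg_left _ (by positivity)
            exact mul_le_mul_of_nonneg_right hPP (Real.exp_pos _).le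
          have e2 : μV * (1 + Hm) * (1 + Real.exp MN) = c5 * (μ0*hp) * (1 + Real.exp MN) := by
            rw [hc5mul]
          nlinarith only [hA', e1, e2]
        have h10 : Real.exp MP ≤ 2*c5*(1+Real.exp MN) := le_of_mul_le_mul_left h9 (by positivity)
        have h11 : Real.exp MN ≤ Real.exp ρ := Real.exp_le_exp.mpr hMNb
        have h12 : (1:ℝ) ≤ Real.exp ρ := by
          rw [← Real.exp_zero]
          exact Real.exp_le_exp.mpr (by linarith only [hρ1])
        have h13 : Real.exp MP ≤ A * Real.exp ρ := by
          calc Real.exp MP ≤ 2*c5*(1+Real.exp MN) := h10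
            _ ≤ 2*c5*(2*Real.exp ρ) := by
                apply mul_le_mul_of_nonneg_left _ (by positivity)
                linarith only [h11, h12]
            _ ≤ A * Real.exp ρ := by nlinarith only [hc5, h12, hAdef]
        have h14 : Real.exp MP ≤ Real.exp (lnA + ρ) := by
          rw [Real.exp_add, hlnAdef, Real.exp_log hApos]
          exact h13
        have h15 := Real.exp_le_exp.mp h14
        rw [hC8def]
        exact h15
    intro x
    exact le_trans (hub x) (max_le hMPb hMNC8)
  -- oscillation estimate
  have hosc : ∀ B : ℝ, 0 ≤ B → (∀ x, |t - h x * P x * Real.exp (u x)| ≤ B) → M - m ≤ K * B := by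
    intro B hB hFB
    set E : ℝ := ∑ x, ∑ y ∈ G.neighborFinset x, w x y * (u y - u x)^2 with hEdef
    have hinner0 : ∀ x, 0 ≤ ∑ y ∈ G.neighborFinset x, w x y * (u y - u x)^2 := by
      intro x
      apply Finset.sum_nonneg
      intro y hy
      exact mul_nonneg (hwpos x y ((SimpleGraph.mem_neighborFinset G x y).mp hy)).le (sq_nonneg _)
    have hE0 : 0 ≤ E := Finset.sum_nonneg fun x _ => hinner0 x
    have l1 : ∑ x, (∑ y ∈ G.neighborFinset x, w x y * (u y - u x)) * u x = -(1/2) * E := by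
      rw [hEdef]
      calc ∑ x, (∑ y ∈ G.neighborFinset x, w x y * (u y - u x)) * u x
          = ∑ x, ∑ y ∈ G.neighborFinset x, w x y * (u y - u x) * u x :=
            Finset.sum_congr rfl fun x _ => Finset.sum_mul _ _ _
        _ = -(1/2) * ∑ x, ∑ y ∈ G.neighborFinset x, w x y * (u y - u x)^2 :=
            energy_identity (G := G) hwsymm u
    have l2 : ∑ x, (∑ y ∈ G.neighborFinset x, w x y * (u y - u x)) * m = 0 := by
      rw [← Finset.sum_mul, antisym_zero (G := G) hwsymm u, zero_mul]
    have hEen : ∑ x, (∑ y ∈ G.neighborFinset x, w x y * (u y - u x)) * (u x - m) = -(1/2) * E := by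
      have hsub : ∑ x, (∑ y ∈ G.neighborFinset x, w x y * (u y - u x)) * (u x - m)
          = (∑ x, (∑ y ∈ G.neighborFinset x, w x y * (u y - u x)) * u x)
            - ∑ x, (∑ y ∈ G.neighborFinset x, w x y * (u y - u x)) * m := by
        rw [← Finset.sum_sub_distrib]
        exact Finset.sum_congr rfl fun x _ => by ring
      rw [hsub, l1, l2]
      ring
    have hElow : -(B * (M - m)) * μV ≤ -(1/2) * E := by
      have hterm : ∀ x ∈ Finset.univ, -(B*(M-m)) * μ x
          ≤ (∑ y ∈ G.neighborFinset x, w x y * (u y - u x)) * (u x - m) := by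
        intro x _
        rw [key x]
        have e1 := (abs_le.mp (hFB x)).1
        have e2 : 0 ≤ u x - m := by linarith only [hmle x]
        have e3 : u x - m ≤ M - m := by linarith only [hMle x, hmle x]
        have p1 : (-B) * (u x - m) ≤ (t - h x * P x * Real.exp (u x)) * (u x - m) :=
          mul_le_mul_of_nonneg_right (by linarith only [e1]) e2
        have p2 : B * (u x - m) ≤ B * (M - m) := mul_le_mul_of_nonneg_left e3 hB
        have q : -(B*(M-m)) ≤ (t - h x * P x * Real.exp (u x)) * (u x - m) := by
          nlinarith only [p1, p2]
        calc -(B*(M-m)) * μ x = μ x * (-(B*(M-m))) := by ring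
          _ ≤ μ x * ((t - h x * P x * Real.exp (u x)) * (u x - m)) :=
            mul_le_mul_of_nonneg_left q (hμ x).le
          _ = μ x * (t - h x * P x * Real.exp (u x)) * (u x - m) := by ring
      calc -(B * (M - m)) * μV = ∑ x, -(B*(M-m)) * μ x := by
            rw [hμVdef, Finset.mul_sum]
        _ ≤ ∑ x, (∑ y ∈ G.neighborFinset x, w x y * (u y - u x)) * (u x - m) :=
            Finset.sum_le_sum hterm
        _ = -(1/2) * E := hEen
    have hEup : E ≤ 2 * B * μV * (M - m) := by nlinarith only [hElow]
    have hedge : ∀ a b, G.Adj a b → |u a - u b| ≤ Real.sqrt (E / w0) := by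
      intro a b hab
      have h1 : w a b * (u b - u a)^2 ≤ ∑ y ∈ G.neighborFinset a, w a y * (u y - u a)^2 :=
        Finset.single_le_sum (f := fun y => w a y * (u y - u a)^2)
          (fun y hy => mul_nonneg (hwpos a y ((SimpleGraph.mem_neighborFinset G a y).mp hy)).le
            (sq_nonneg _))
          ((SimpleGraph.mem_neighborFinset G a b).mpr hab)
      have h2 : ∑ y ∈ G.neighborFinset a, w a y * (u y - u a)^2 ≤ E := by
        rw [hEdef]
        exact Finset.single_le_sum (fun x _ => hinner0 x) (Finset.mem_univ a)
      have h3 : (u a - u b)^2 ≤ E / w0 := by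
        rw [le_div_iff₀ hw0]
        have h4 := hw0le a b hab
        have h5 : w0 * (u b - u a)^2 ≤ w a b * (u b - u a)^2 :=
          mul_le_mul_of_nonneg_right h4 (sq_nonneg _)
        nlinarith only [h5, h1, h2]
      calc |u a - u b| = Real.sqrt ((u a - u b)^2) := (Real.sqrt_sq_eq_abs _).symm
        _ ≤ Real.sqrt (E / w0) := Real.sqrt_le_sqrt h3
    have htel : M - m ≤ (Nc - 1) * Real.sqrt (E / w0) := by
      have p0 : G.Walk xM xm := (hconn.preconnected xM xm).some
      have hpath := SimpleGraph.Walk.bypass_isPath p0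
      have hlen : ((p0.bypass).length : ℝ) ≤ Nc - 1 := by
        have h5 := hpath.length_lt
        have h6 : ((p0.bypass).length : ℝ) + 1 ≤ (Fintype.card V : ℝ) := by
          exact_mod_cast Nat.succ_le_of_lt h5
        rw [hNcdef]
        linarith only [h6]
      have h7 := walk_telescope (G := G) hedge p0.bypass
      have h8 : |u xM - u xm| = M - m := by
        rw [abs_of_nonneg (by linarith only [hmle xM])]
      calc M - m = |u xM - u xm| := h8.symm
        _ ≤ (p0.bypass).length * Real.sqrt (E/w0) := h7
        _ ≤ (Nc-1) * Real.sqrt (E/w0) :=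
            mul_le_mul_of_nonneg_right hlen (Real.sqrt_nonneg _)
    have hMm0 : 0 ≤ M - m := by linarith only [hmle xM]
    have hsq : (M - m)^2 ≤ (Nc-1)^2 * (E/w0) := by
      have h9 : (M-m)^2 ≤ ((Nc-1)*Real.sqrt (E/w0))^2 := pow_le_pow_left₀ hMm0 htel 2
      rw [mul_pow, Real.sq_sqrt (div_nonneg hE0 hw0.le)] at h9
      exact h9
    have hKBM : (Nc-1)^2 * (E/w0) ≤ K * B * (M-m) := by
      have h10 : E / w0 ≤ (2*B*μV*(M-m)) / w0 := (div_le_div_iff_of_pos_right hw0).mpr hEup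
      have h11 : (Nc-1)^2 * (E/w0) ≤ (Nc-1)^2 * ((2*B*μV*(M-m))/w0) :=
        mul_le_mul_of_nonneg_left h10 (sq_nonneg _)
      have h12 : (Nc-1)^2 * ((2*B*μV*(M-m))/w0) = K * B * (M-m) := by
        rw [hKdef]
        field_simp
      linarith only [h11, h12]
    nlinarith only [hsq, hKBM, hMm0, mul_nonneg hK hB]
  -- Step L : lower bound for the maximum via the sign condition
  have hC9pos : (0:ℝ) < C9 := lt_of_lt_of_le one_pos hC91
  have hMlow : -C9 ≤ M := by
    by_contra hcon
    push_neg at hcon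
    have hexpM : ∀ x, Real.exp (u x) ≤ Real.exp M := fun x => Real.exp_le_exp.mpr (hMle x)
    have huneg : ∀ x, u x < -C9 := fun x => lt_of_le_of_lt (hMle x) hcon
    have htb : t * μV ≤ Hm * Real.exp M * μV := by
      rw [← Id1]
      calc ∑ x, μ x * (h x * P x * Real.exp (u x))
          ≤ ∑ x, μ x * (Hm * Real.exp M) := by
            apply Finset.sum_le_sum
            intro x _
            apply mul_le_mul_of_nonneg_left _ (hμ x).le
            have e1 : h x * P x ≤ Hm := by
              calc h x * P x ≤ |h x| * P x :=
                    mul_le_mul_of_nonneg_right (le_abs_self _) (hP0 x)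
                _ ≤ Hm * 1 := mul_le_mul (hHmle x) (hP1 x) (hP0 x) hHm.le
                _ = Hm := mul_one _
            calc h x * P x * Real.exp (u x) ≤ Hm * Real.exp (u x) :=
                  mul_le_mul_of_nonneg_right e1 (Real.exp_pos _).le
              _ ≤ Hm * Real.exp M := mul_le_mul_of_nonneg_left (hexpM x) hHm.le
        _ = (∑ x, μ x) * (Hm * Real.exp M) := (Finset.sum_mul _ _ _).symm
        _ = Hm * Real.exp M * μV := by rw [← hμVdef]; ring
    have ht' : t ≤ Hm * Real.exp M := (mul_le_mul_iff_of_pos_right hμV).mp htb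
    set B1 : ℝ := Hm * Real.exp M + t with hB1def
    have hB1nn : 0 ≤ B1 := by
      have : 0 < Hm * Real.exp M := by positivity
      rw [hB1def]
      linarith only [this, ht0]
    have hFB1 : ∀ x, |t - h x * P x * Real.exp (u x)| ≤ B1 := by
      intro x
      have e1 : |h x * P x * Real.exp (u x)| ≤ Hm * Real.exp M := by
        rw [abs_mul, abs_mul, abs_of_nonneg (hP0 x), abs_of_nonneg (Real.exp_pos (u x)).le]
        calc |h x| * P x * Real.exp (u x) ≤ (Hm * 1) * Real.exp (u x) :=
              mul_le_mul_of_nonneg_right (mul_le_mul (hHmle x) (hP1 x) (hP0 x) hHm.le)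
                (Real.exp_pos _).le
          _ = Hm * Real.exp (u x) := by ring
          _ ≤ Hm * Real.exp M := mul_le_mul_of_nonneg_left (hexpM x) hHm.le
      have e2 : |t - h x * P x * Real.exp (u x)| ≤ |t| + |h x * P x * Real.exp (u x)| := by
        rw [sub_eq_add_neg]
        calc |t + -(h x * P x * Real.exp (u x))| ≤ |t| + |-(h x * P x * Real.exp (u x))| :=
              abs_add_le _ _
          _ = |t| + |h x * P x * Real.exp (u x)| := by rw [abs_neg]
      rw [abs_of_nonneg ht0] at e2
      rw [hB1def]
      linarith only [e1, e2]
    have hoscM := hosc B1 hB1nn hFB1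
    have hX9 : Real.exp M ≤ 1/C9 := by
      have g1 : Real.exp M ≤ Real.exp (-C9) := Real.exp_le_exp.mpr (by linarith only [hcon])
      have g2 : C9 ≤ Real.exp C9 := by linarith only [Real.add_one_le_exp C9]
      have g3 : Real.exp (-C9) ≤ 1/C9 := by
        rw [Real.exp_neg, inv_eq_one_div]
        exact one_div_le_one_div_of_le hC9pos g2
      linarith only [g1, g3]
    have hosc9 : M - m ≤ 2*K*Hm*(1/C9) := by
      have g4 : K * B1 ≤ K * (2 * (Hm * Real.exp M)) := by
        apply mul_le_mul_of_nonneg_left _ hK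
        rw [hB1def]
        linarith only [ht']
      have g5 : K * (2 * (Hm * Real.exp M)) ≤ K * (2 * (Hm * (1/C9))) := by
        apply mul_le_mul_of_nonneg_left _ hK
        have := mul_le_mul_of_nonneg_left hX9 hHm.le
        linarith only [this]
      calc M - m ≤ K * B1 := hoscM
        _ ≤ K * (2 * (Hm * (1/C9))) := le_trans g4 g5
        _ = 2*K*Hm*(1/C9) := by ring
    -- pointwise estimate
    have hptw : ∀ x, μ x * (h x * P x * Real.exp (u x))
        ≤ μ x * h x * Real.exp M + μ x * (Hm * (Real.exp M * (1/C9 + (M - m)))) := by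
      intro x
      have hdiff : |P x * Real.exp (u x) - Real.exp M| ≤ Real.exp M * (1/C9 + (M - m)) := by
        have e1 : |P x - 1| = 1/(1 + (u x)^(2*n)) := by
          rw [abs_of_nonpos (by linarith only [hP1 x])]
          have e1' : 1 - P x = 1/(1+(u x)^(2*n)) := by
            rw [hPdef]
            have hd := (hden (u x)).ne'
            field_simp
            ring
          linarith only [e1']
        have e2 : C9 ≤ 1 + (u x)^(2*n) := by
          have f1 : C9 ≤ -u x := by linarith only [huneg x]
          have f2 : C9^(2*n) ≤ (-u x)^(2*n) := pow_le_pow_left₀ hC9pos.le f1 _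
          have f3 : (-u x)^(2*n) = (u x)^(2*n) := (even_two_mul n).neg_pow _
          have f4 : C9 ≤ C9^(2*n) := le_self_pow₀ hC91 (by omega)
          linarith only [f2, f3, f4]
        have e3 : 1/(1+(u x)^(2*n)) ≤ 1/C9 := one_div_le_one_div_of_le hC9pos e2
        have e4 : |P x - 1| ≤ 1/C9 := by rw [e1]; exact e3
        have d1 : |(P x - 1) * Real.exp (u x)| ≤ Real.exp M * (1/C9) := by
          rw [abs_mul, abs_of_nonneg (Real.exp_pos (u x)).le]
          calc |P x - 1| * Real.exp (u x) ≤ (1/C9) * Real.exp M :=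
                mul_le_mul e4 (hexpM x) (Real.exp_pos _).le (by positivity)
            _ = Real.exp M * (1/C9) := by ring
        have d2 : |Real.exp (u x) - Real.exp M| ≤ Real.exp M * (M - m) := by
          rw [abs_of_nonpos (by linarith only [hexpM x])]
          have g1 : (u x - M) + 1 ≤ Real.exp (u x - M) := Real.add_one_le_exp _
          have g2 : Real.exp (u x - M) = Real.exp (u x) / Real.exp M := Real.exp_sub _ _
          have g3 : Real.exp M * ((u x - M) + 1) ≤ Real.exp (u x) := by
            rw [g2] at g1
            calc Real.exp M * ((u x - M)+1)
                ≤ Real.exp M * (Real.exp (u x)/Real.exp M) :=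
                  mul_le_mul_of_nonneg_left g1 (Real.exp_pos M).le
              _ = Real.exp (u x) := by field_simp
          have g4 : M - u x ≤ M - m := by linarith only [hmle x]
          nlinarith only [g3, g4, (Real.exp_pos M).le]
        calc |P x * Real.exp (u x) - Real.exp M|
            = |(P x - 1) * Real.exp (u x) + (Real.exp (u x) - Real.exp M)| := by ring_nf
          _ ≤ |(P x - 1) * Real.exp (u x)| + |Real.exp (u x) - Real.exp M| := abs_add_le _ _
          _ ≤ Real.exp M * (1/C9) + Real.exp M * (M - m) := add_le_add d1 d2
          _ = Real.exp M * (1/C9 + (M - m)) := by ring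
      have hx2 : h x * (P x * Real.exp (u x) - Real.exp M)
          ≤ Hm * (Real.exp M * (1/C9 + (M-m))) := by
        calc h x * (P x * Real.exp (u x) - Real.exp M)
            ≤ |h x * (P x * Real.exp (u x) - Real.exp M)| := le_abs_self _
          _ = |h x| * |P x * Real.exp (u x) - Real.exp M| := abs_mul _ _
          _ ≤ Hm * (Real.exp M * (1/C9+(M-m))) :=
              mul_le_mul (hHmle x) hdiff (abs_nonneg _) hHm.le
      have hx3 : h x * P x * Real.exp (u x)
          ≤ h x * Real.exp M + Hm*(Real.exp M*(1/C9+(M-m))) := by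
        nlinarith only [hx2]
      calc μ x * (h x * P x * Real.exp (u x))
          ≤ μ x * (h x * Real.exp M + Hm*(Real.exp M*(1/C9+(M-m)))) :=
            mul_le_mul_of_nonneg_left hx3 (hμ x).le
        _ = μ x * h x * Real.exp M + μ x * (Hm * (Real.exp M * (1/C9+(M-m)))) := by ring
    have hsum : t * μV ≤ I * Real.exp M + μV * (Hm * (Real.exp M * (1/C9 + (M-m)))) := by
      rw [← Id1]
      calc ∑ x, μ x * (h x * P x * Real.exp (u x))
          ≤ ∑ x, (μ x * h x * Real.exp M + μ x * (Hm * (Real.exp M * (1/C9 + (M - m))))) :=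
            Finset.sum_le_sum (fun x _ => hptw x)
        _ = I * Real.exp M + μV * (Hm * (Real.exp M * (1/C9+(M-m)))) := by
            rw [Finset.sum_add_distrib]
            have e5 : ∑ x, μ x * h x * Real.exp M = I * Real.exp M := by
              rw [hIdef]
              exact (Finset.sum_mul _ _ _).symm
            have e6 : ∑ x, μ x * (Hm * (Real.exp M * (1/C9+(M-m))))
                = μV * (Hm * (Real.exp M * (1/C9+(M-m)))) := by
              rw [hμVdef]
              exact (Finset.sum_mul _ _ _).symm
            rw [e5, e6]
    have hI' : (0:ℝ) < -I := neg_pos.mpr hI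
    have hkey9 : μV * Hm * (1 + 2*K*Hm) / C9 ≤ -I / 2 := by
      have e1 : 2*μV*Hm*(1+2*K*Hm) ≤ C9 * (-I) := by
        have := (div_le_iff₀ hI').mp hC9I
        linarith only [this]
      rw [div_le_div_iff₀ hC9pos two_pos]
      linarith only [e1]
    have hbr : I + μV*Hm*(1/C9 + (M-m)) ≤ I/2 := by
      have e2 : μV*Hm*(1/C9 + (M-m)) ≤ μV*Hm*((1+2*K*Hm)/C9) := by
        apply mul_le_mul_of_nonneg_left _ (by positivity)
        have e3 : (1+2*K*Hm)/C9 = 1/C9 + 2*K*Hm*(1/C9) := by ring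
        rw [e3]
        linarith only [hosc9]
      have e4 : μV*Hm*((1+2*K*Hm)/C9) = μV*Hm*(1+2*K*Hm)/C9 := by ring
      linarith only [e2, e4, hkey9, hI]
    have hbound : Real.exp M * (I + μV*Hm*(1/C9+(M-m))) < 0 :=
      mul_neg_of_pos_of_neg (Real.exp_pos M) (by linarith only [hbr, hI])
    have heq7 : I * Real.exp M + μV * (Hm * (Real.exp M * (1/C9 + (M-m))))
        = Real.exp M * (I + μV*Hm*(1/C9+(M-m))) := by ring
    have htV : 0 ≤ t * μV := mul_nonneg ht0 hμV.le
    linarith only [hsum, hbound, heq7, htV]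
  -- conclusion
  have hFB0 : ∀ x, |t - h x * P x * Real.exp (u x)| ≤ B0 := by
    intro x
    have hexpC8 : Real.exp (u x) ≤ Real.exp C8 := Real.exp_le_exp.mpr (hubC8 x)
    have e1 : |h x * P x * Real.exp (u x)| ≤ Hm * Real.exp C8 := by
      rw [abs_mul, abs_mul, abs_of_nonneg (hP0 x), abs_of_nonneg (Real.exp_pos (u x)).le]
      calc |h x| * P x * Real.exp (u x) ≤ (Hm * 1) * Real.exp (u x) :=
            mul_le_mul_of_nonneg_right (mul_le_mul (hHmle x) (hP1 x) (hP0 x) hHm.le)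
              (Real.exp_pos _).le
        _ = Hm * Real.exp (u x) := by ring
        _ ≤ Hm * Real.exp C8 := mul_le_mul_of_nonneg_left hexpC8 hHm.le
    have e2 : |t - h x * P x * Real.exp (u x)| ≤ |t| + |h x * P x * Real.exp (u x)| := by
      rw [sub_eq_add_neg]
      calc |t + -(h x * P x * Real.exp (u x))| ≤ |t| + |-(h x * P x * Real.exp (u x))| :=
            abs_add_le _ _
        _ = |t| + |h x * P x * Real.exp (u x)| := by rw [abs_neg]
    rw [abs_of_nonneg ht0] at e2
    rw [hB0def]
    linarith only [e1, e2, ht1]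
  have hoscfin : M - m ≤ K * B0 := hosc B0 hB0.le hFB0
  intro x
  rw [abs_le]
  constructor
  · have e1 := hmle x
    have e2 : -C9 - K * B0 ≤ m := by linarith only [hMlow, hoscfin]
    linarith only [e1, e2, hC8]
  · have := hubC8 x
    have e3 : 0 ≤ K * B0 := mul_nonneg hK hB0.le
    linarith only [this, hC91, e3]
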